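/- As formal power series, (-q;q^4)_\infty(-q^3;q^4)_\infty(-q^4;q^4)_\infty \cdot (q^2;q^2)_\infty/(-q;q^2)_\infty = \sum_{n=0}^{\infty}(-1)^{n(n+1)/2} q^{n(n+1)}. -/

import Mathlib

open scoped Classical

/-- Formal infinite product `∏_{k=0}^∞ f k` of power series, for families where
`f k ≡ 1 (mod q^{k+1})` (as for all q-Pochhammer factors below): the coefficient of `q^n`
is then the (stable) coefficient of `q^n` in any partial product `∏_{k≤N} f k` with `N ≥ n`. -/
noncomputable def infProd (f : ℕ → PowerSeries ℚ) : PowerSeries ℚ :=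
  PowerSeries.mk fun n => PowerSeries.coeff (R := ℚ) n (∏ k ∈ Finset.range (n + 1), f k)

/-- `(-q;q⁴)_∞` -/
noncomputable def P1 : PowerSeries ℚ :=
  infProd fun k => 1 + (PowerSeries.X : PowerSeries ℚ) ^ (4 * k + 1)
/-- `(-q³;q⁴)_∞` -/
noncomputable def P3 : PowerSeries ℚ :=
  infProd fun k => 1 + (PowerSeries.X : PowerSeries ℚ) ^ (4 * k + 3)
/-- `(-q⁴;q⁴)_∞` -/
noncomputable def P4' : PowerSeries ℚ :=
  infProd fun k => 1 + (PowerSeries.X : PowerSeries ℚ) ^ (4 * k + 4)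
/-- `(q²;q²)_∞` -/
noncomputable def P4 : PowerSeries ℚ :=
  infProd fun k => 1 - (PowerSeries.X : PowerSeries ℚ) ^ (2 * k + 2)
/-- `(-q;q²)_∞` -/
noncomputable def P5 : PowerSeries ℚ :=
  infProd fun k => 1 + (PowerSeries.X : PowerSeries ℚ) ^ (2 * k + 1)

/-- The right-hand side `∑_{n≥0} (-1)^{n(n+1)/2} q^{n(n+1)}`: its `q^m`-coefficient is
`(-1)^{m/2}` when `m = n(n+1)` for some `n ≥ 0`, and `0` otherwise. -/
noncomputable def RHS : PowerSeries ℚ :=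
  PowerSeries.mk fun m =>
    if ∃ n : ℕ, m = n * (n + 1) then (-1) ^ (m / 2) else 0

open PowerSeries Finset

/-- coefficients up to `n` agree -/
def EqN (n : ℕ) (φ ψ : PowerSeries ℚ) : Prop := ∀ m ≤ n, coeff m φ = coeff m ψ

lemma EqN.refl {n : ℕ} {φ : PowerSeries ℚ} : EqN n φ φ := fun _ _ => _root_.rfl

lemma EqN.mul {n : ℕ} {a b c d : PowerSeries ℚ} (h1 : EqN n a c) (h2 : EqN n b d) :
    EqN n (a * b) (c * d) := by
  intro m hm
  rw [coeff_mul, coeff_mul]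
  refine Finset.sum_congr rfl ?_
  intro x hx
  rw [Finset.HasAntidiagonal.mem_antidiagonal] at hx
  rw [h1 x.1 (by omega), h2 x.2 (by omega)]

lemma coeff_mul_eqn_one {n : ℕ} {g h : PowerSeries ℚ} (hh : EqN n h 1) :
    coeff n (g * h) = coeff n g := by
  have := (EqN.refl (φ := g)).mul hh n le_rfl
  simpa using this

lemma EqN_one_add {n a : ℕ} (h : n < a) : EqN n (1 + X ^ a : PowerSeries ℚ) 1 := by
  intro m hm
  have hma : m ≠ a := by omega
  simp [map_add, coeff_X_pow, hma]

lemma EqN_one_sub {n a : ℕ} (h : n < a) : EqN n (1 - X ^ a : PowerSeries ℚ) 1 := by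
  intro m hm
  have hma : m ≠ a := by omega
  simp [map_sub, coeff_X_pow, hma]

lemma coeff_infProd (f : ℕ → PowerSeries ℚ) (hf : ∀ n k, n ≤ k → EqN n (f k) 1)
    (n N : ℕ) (hN : n < N) :
    coeff n (infProd f) = coeff n (∏ k ∈ Finset.range N, f k) := by
  have aux : ∀ d, coeff n (∏ k ∈ Finset.range (n + 1 + d), f k)
      = coeff n (∏ k ∈ Finset.range (n + 1), f k) := by
    intro d
    induction d with
    | zero => rfl
    | succ d ih =>
      rw [show n + 1 + (d + 1) = (n + 1 + d) + 1 by omega, Finset.prod_range_succ,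
        coeff_mul_eqn_one (hf n (n + 1 + d) (by omega)), ih]
  have hNd : N = n + 1 + (N - (n + 1)) := by omega
  rw [infProd, coeff_mk, hNd, aux]

lemma EqN_infProd (f : ℕ → PowerSeries ℚ) (hf : ∀ n k, n ≤ k → EqN n (f k) 1)
    (n N : ℕ) (hN : n < N) : EqN n (infProd f) (∏ k ∈ Finset.range N, f k) := by
  intro m hm
  rw [coeff_infProd f hf m N (by omega)]

lemma prod_range_two_mul {M : Type*} [CommMonoid M] (f : ℕ → M) (N : ℕ) :
    ∏ k ∈ Finset.range (2 * N), f k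
      = (∏ k ∈ Finset.range N, f (2 * k)) * ∏ k ∈ Finset.range N, f (2 * k + 1) := by
  induction N with
  | zero => simp
  | succ N ih =>
    rw [show 2 * (N + 1) = (2 * N + 1) + 1 by omega, Finset.prod_range_succ,
      Finset.prod_range_succ, ih, Finset.prod_range_succ, Finset.prod_range_succ]
    rw [mul_assoc, mul_mul_mul_comm]

/-! ### The base products and Gaussian binomial-type series -/

noncomputable def Pi8 (n : ℕ) : PowerSeries ℚ := ∏ i ∈ Finset.range n, (1 - X ^ (8 * i + 8))

lemma constCoeff_Pi8 (n : ℕ) : constantCoeff (Pi8 n) = 1 := by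
  simp [Pi8, map_prod]

lemma Pi8_ne_zero (n : ℕ) : Pi8 n ≠ 0 := by
  intro h
  have := constCoeff_Pi8 n
  rw [h] at this
  simp at this

lemma Pi8_mul_inv (n : ℕ) : Pi8 n * (Pi8 n)⁻¹ = 1 :=
  PowerSeries.mul_inv_cancel _ (by rw [constCoeff_Pi8]; exact one_ne_zero)

lemma Pi8_inv_mul (n : ℕ) : (Pi8 n)⁻¹ * Pi8 n = 1 := by
  rw [mul_comm]; exact Pi8_mul_inv n

lemma Pi8_succ (n : ℕ) : Pi8 (n + 1) = Pi8 n * (1 - X ^ (8 * n + 8)) :=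
  Finset.prod_range_succ _ _

lemma Pi8_zero : Pi8 0 = 1 := Finset.prod_range_zero _

lemma Pi8_zero_inv : (Pi8 0 : PowerSeries ℚ)⁻¹ = 1 := by
  have := PowerSeries.mul_inv_cancel (1 : PowerSeries ℚ) (by simp)
  rw [Pi8_zero]; simpa using this

noncomputable def GB (m : ℕ) (r : ℤ) : PowerSeries ℚ :=
  if 0 ≤ r ∧ r ≤ (m : ℤ) then Pi8 m * (Pi8 r.toNat)⁻¹ * (Pi8 (m - r.toNat))⁻¹ else 0

lemma GB_eval (m r : ℕ) (h : r ≤ m) :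
    GB m (r : ℤ) = Pi8 m * (Pi8 r)⁻¹ * (Pi8 (m - r))⁻¹ := by
  rw [GB, if_pos ⟨Int.natCast_nonneg r, by exact_mod_cast h⟩, Int.toNat_natCast]

lemma GB_neg {m : ℕ} {r : ℤ} (h : r < 0) : GB m r = 0 := by
  rw [GB, if_neg]; omega

lemma GB_gt {m : ℕ} {r : ℤ} (h : (m : ℤ) < r) : GB m r = 0 := by
  rw [GB, if_neg]; omega

lemma GB_zero (m : ℕ) : GB m 0 = 1 := by
  have h := GB_eval m 0 (Nat.zero_le m)
  rw [show ((0:ℕ):ℤ) = 0 by norm_num] at h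
  rw [h, Pi8_zero_inv, mul_one, Nat.sub_zero, Pi8_mul_inv]

lemma GB_diag (m : ℕ) : GB m (m : ℤ) = 1 := by
  rw [GB_eval m m le_rfl, Nat.sub_self, Pi8_zero_inv, Pi8_mul_inv, one_mul]

lemma mul_Pi8_ne_zero (a b : ℕ) : Pi8 a * Pi8 b ≠ 0 :=
  mul_ne_zero (Pi8_ne_zero a) (Pi8_ne_zero b)

/-- first q-Pascal rule -/
lemma pascal1 (m : ℕ) (r : ℤ) :
    GB (m + 1) r = GB m r + X ^ (8 * ((m : ℤ) + 1 - r)).toNat * GB m (r - 1) := by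
  rcases lt_trichotomy r 0 with hr | hr | hr
  · rw [GB_neg hr, GB_neg hr, GB_neg (by omega : r - 1 < 0)]; ring
  · subst hr
    rw [GB_zero, GB_zero, GB_neg (by omega : (0:ℤ) - 1 < 0)]; ring
  · rcases lt_trichotomy r ((m : ℤ) + 1) with hr2 | hr2 | hr2
    · -- main case : 1 ≤ r ≤ m
      have hr0 : 0 ≤ r := le_of_lt hr
      lift r to ℕ using hr0 with r'
      have h1 : 1 ≤ r' := by exact_mod_cast hr
      have h2 : r' ≤ m := by omega
      have hcast : ((r' : ℤ)) - 1 = ((r' - 1 : ℕ) : ℤ) := by omega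
      have hexp : (8 * ((m : ℤ) + 1 - r')).toNat = 8 * (m + 1 - r') := by omega
      rw [hcast, hexp, GB_eval (m+1) r' (by omega), GB_eval m r' h2,
        GB_eval m (r'-1) (by omega), show m + 1 - r' = m - r' + 1 by omega,
        show m - (r' - 1) = m - r' + 1 by omega]
      have hb : (Pi8 (m - r'))⁻¹ * Pi8 (m - r' + 1) = 1 - X ^ (8 * (m - r') + 8) := by
        rw [Pi8_succ, ← mul_assoc, Pi8_inv_mul, one_mul]
      have hc : (Pi8 (r' - 1))⁻¹ * Pi8 r' = 1 - X ^ (8 * (r' - 1) + 8) := by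
        have hc' : (Pi8 (r' - 1))⁻¹ * Pi8 ((r' - 1) + 1) = 1 - X ^ (8 * (r' - 1) + 8) := by
          rw [Pi8_succ, ← mul_assoc, Pi8_inv_mul, one_mul]
        rwa [show r' - 1 + 1 = r' by omega] at hc'
      apply mul_right_cancel₀ (mul_Pi8_ne_zero r' (m - r' + 1))
      have lhs_eq : Pi8 (m + 1) * (Pi8 r')⁻¹ * (Pi8 (m - r' + 1))⁻¹ * (Pi8 r' * Pi8 (m - r' + 1))
          = Pi8 (m + 1) := by
        calc Pi8 (m + 1) * (Pi8 r')⁻¹ * (Pi8 (m - r' + 1))⁻¹ * (Pi8 r' * Pi8 (m - r' + 1))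
            = Pi8 (m + 1) * ((Pi8 r')⁻¹ * Pi8 r')
              * ((Pi8 (m - r' + 1))⁻¹ * Pi8 (m - r' + 1)) := by ring
          _ = Pi8 (m + 1) := by rw [Pi8_inv_mul, Pi8_inv_mul, mul_one, mul_one]
      rw [lhs_eq]
      symm
      have hEB : (X : PowerSeries ℚ) ^ (8 * (m - r' + 1)) * X ^ (8 * (r' - 1) + 8)
          = X ^ (8 * m + 8) := by
        rw [← pow_add]; congr 1; omega
      have hA : (8 : ℕ) * (m - r') + 8 = 8 * (m - r' + 1) := by omega
      calc (Pi8 m * (Pi8 r')⁻¹ * (Pi8 (m - r'))⁻¹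
            + X ^ (8 * (m - r' + 1)) * (Pi8 m * (Pi8 (r' - 1))⁻¹ * (Pi8 (m - r' + 1))⁻¹))
            * (Pi8 r' * Pi8 (m - r' + 1))
          = Pi8 m * ((Pi8 r')⁻¹ * Pi8 r') * ((Pi8 (m - r'))⁻¹ * Pi8 (m - r' + 1))
            + X ^ (8 * (m - r' + 1)) * (Pi8 m * ((Pi8 (r' - 1))⁻¹ * Pi8 r')
              * ((Pi8 (m - r' + 1))⁻¹ * Pi8 (m - r' + 1))) := by ring
        _ = Pi8 m * (1 - X ^ (8 * (m - r') + 8))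
            + X ^ (8 * (m - r' + 1)) * (Pi8 m * (1 - X ^ (8 * (r' - 1) + 8))) := by
            rw [Pi8_inv_mul, Pi8_inv_mul, hb, hc]; ring
        _ = Pi8 (m + 1) := by
            rw [Pi8_succ, hA]
            linear_combination (-(Pi8 m : PowerSeries ℚ)) * hEB
    · -- r = m + 1
      subst hr2
      rw [show (m : ℤ) + 1 = ((m + 1 : ℕ) : ℤ) by push_cast; ring, GB_diag,
        GB_gt (by omega : (m : ℤ) < ((m + 1 : ℕ) : ℤ)),
        show ((m + 1 : ℕ) : ℤ) - 1 = (m : ℤ) by push_cast; ring, GB_diag,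
        show (8 * (((m + 1 : ℕ) : ℤ) - ((m + 1 : ℕ) : ℤ))).toNat = 0 by omega]
      simp
    · rw [GB_gt (by omega : (m : ℤ) + 1 < r), GB_gt (by omega : (m : ℤ) < r),
        GB_gt (by omega : (m : ℤ) < r - 1)]
      ring

/-- second q-Pascal rule -/
lemma pascal2 (m : ℕ) (r : ℤ) :
    GB (m + 1) r = X ^ (8 * r).toNat * GB m r + GB m (r - 1) := by
  rcases lt_trichotomy r 0 with hr | hr | hr
  · rw [GB_neg hr, GB_neg hr, GB_neg (by omega : r - 1 < 0)]; ring
  · subst hr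
    rw [GB_zero, GB_zero, GB_neg (by omega : (0:ℤ) - 1 < 0)]
    norm_num
  · rcases lt_trichotomy r ((m : ℤ) + 1) with hr2 | hr2 | hr2
    · -- main case : 1 ≤ r ≤ m
      have hr0 : 0 ≤ r := le_of_lt hr
      lift r to ℕ using hr0 with r'
      have h1 : 1 ≤ r' := by exact_mod_cast hr
      have h2 : r' ≤ m := by omega
      have hcast : ((r' : ℤ)) - 1 = ((r' - 1 : ℕ) : ℤ) := by omega
      have hexp : (8 * (r' : ℤ)).toNat = 8 * r' := by omega
      rw [hcast, hexp, GB_eval (m+1) r' (by omega), GB_eval m r' h2,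
        GB_eval m (r'-1) (by omega), show m + 1 - r' = m - r' + 1 by omega,
        show m - (r' - 1) = m - r' + 1 by omega]
      have hb : (Pi8 (m - r'))⁻¹ * Pi8 (m - r' + 1) = 1 - X ^ (8 * (m - r') + 8) := by
        rw [Pi8_succ, ← mul_assoc, Pi8_inv_mul, one_mul]
      have hc : (Pi8 (r' - 1))⁻¹ * Pi8 r' = 1 - X ^ (8 * (r' - 1) + 8) := by
        have hc' : (Pi8 (r' - 1))⁻¹ * Pi8 ((r' - 1) + 1) = 1 - X ^ (8 * (r' - 1) + 8) := by
          rw [Pi8_succ, ← mul_assoc, Pi8_inv_mul, one_mul]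
        rwa [show r' - 1 + 1 = r' by omega] at hc'
      apply mul_right_cancel₀ (mul_Pi8_ne_zero r' (m - r' + 1))
      have lhs_eq : Pi8 (m + 1) * (Pi8 r')⁻¹ * (Pi8 (m - r' + 1))⁻¹ * (Pi8 r' * Pi8 (m - r' + 1))
          = Pi8 (m + 1) := by
        calc Pi8 (m + 1) * (Pi8 r')⁻¹ * (Pi8 (m - r' + 1))⁻¹ * (Pi8 r' * Pi8 (m - r' + 1))
            = Pi8 (m + 1) * ((Pi8 r')⁻¹ * Pi8 r')
              * ((Pi8 (m - r' + 1))⁻¹ * Pi8 (m - r' + 1)) := by ring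
          _ = Pi8 (m + 1) := by rw [Pi8_inv_mul, Pi8_inv_mul, mul_one, mul_one]
      rw [lhs_eq]
      symm
      have hEB : (X : PowerSeries ℚ) ^ (8 * r') * X ^ (8 * (m - r') + 8)
          = X ^ (8 * m + 8) := by
        rw [← pow_add]; congr 1; omega
      have hB : (8 : ℕ) * (r' - 1) + 8 = 8 * r' := by omega
      calc (X ^ (8 * r') * (Pi8 m * (Pi8 r')⁻¹ * (Pi8 (m - r'))⁻¹)
            + Pi8 m * (Pi8 (r' - 1))⁻¹ * (Pi8 (m - r' + 1))⁻¹)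
            * (Pi8 r' * Pi8 (m - r' + 1))
          = X ^ (8 * r') * (Pi8 m * ((Pi8 r')⁻¹ * Pi8 r') * ((Pi8 (m - r'))⁻¹ * Pi8 (m - r' + 1)))
            + Pi8 m * ((Pi8 (r' - 1))⁻¹ * Pi8 r')
              * ((Pi8 (m - r' + 1))⁻¹ * Pi8 (m - r' + 1)) := by ring
        _ = X ^ (8 * r') * (Pi8 m * (1 - X ^ (8 * (m - r') + 8)))
            + Pi8 m * (1 - X ^ (8 * (r' - 1) + 8)) := by
            rw [Pi8_inv_mul, Pi8_inv_mul, hb, hc]; ring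
        _ = Pi8 (m + 1) := by
            rw [Pi8_succ, hB]
            linear_combination (-(Pi8 m : PowerSeries ℚ)) * hEB
    · -- r = m + 1
      subst hr2
      rw [show (m : ℤ) + 1 = ((m + 1 : ℕ) : ℤ) by push_cast; ring, GB_diag,
        GB_gt (by omega : (m : ℤ) < ((m + 1 : ℕ) : ℤ)),
        show ((m + 1 : ℕ) : ℤ) - 1 = (m : ℤ) by push_cast; ring, GB_diag]
      simp
    · rw [GB_gt (by omega : (m : ℤ) + 1 < r), GB_gt (by omega : (m : ℤ) < r),
        GB_gt (by omega : (m : ℤ) < r - 1)]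
      ring

/-! ### The theta-series side -/

/-- sign `(-1)^j` -/
noncomputable def sg (j : ℤ) : ℚ := if Even j then 1 else -1

lemma sg_succ (j : ℤ) : sg (j + 1) = -sg j := by
  by_cases h : Even j
  · simp [sg, h, Int.even_add_one]
  · simp [sg, h, Int.even_add_one]

/-- exponent `4j² - 2j` -/
def ee (j : ℤ) : ℕ := (4 * j ^ 2 - 2 * j).toNat

lemma quad0 (j : ℤ) : 0 ≤ 4 * j ^ 2 - 2 * j := by
  rcases le_or_gt j 0 with h | h
  · nlinarith
  · nlinarith

lemma ee_cast (j : ℤ) : ((ee j : ℤ)) = 4 * j ^ 2 - 2 * j := Int.toNat_of_nonneg (quad0 j)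

noncomputable def Sg (N M : ℕ) : PowerSeries ℚ :=
  ∑ j ∈ Finset.Icc (-(M:ℤ)) (N:ℤ), C (sg j) * (X ^ ee j * GB (M + N) ((M:ℤ) + j))

lemma sum_shift' (a b : ℤ) (f : ℤ → PowerSeries ℚ) :
    ∑ j ∈ Finset.Icc (a+1) (b+1), f j = ∑ j ∈ Finset.Icc a b, f (j+1) := by
  have hmap : Finset.Icc (a+1) (b+1)
      = Finset.map ⟨fun x => x+1, add_left_injective 1⟩ (Finset.Icc a b) := by
    ext x; simp only [Finset.mem_Icc, Finset.mem_map, Function.Embedding.coeFn_mk]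
    constructor
    · intro h; exact ⟨x-1, by omega, by ring⟩
    · rintro ⟨y, hy, rfl⟩; omega
  rw [hmap, Finset.sum_map]
  rfl

lemma ee_shift_up (j : ℤ) (N : ℕ) (hj : j ≤ (N:ℤ)) :
    ee (j+1) + (8*((N:ℤ)-j)).toNat = ee j + (8*N+2) := by
  have h1 : 0 ≤ 4*(j+1)^2 - 2*(j+1) := quad0 (j+1)
  have h2 : 0 ≤ 4*j^2 - 2*j := quad0 j
  have h3 : (4*(j+1)^2 - 2*(j+1)) + 8*((N:ℤ)-j) = (4*j^2-2*j) + (8*(N:ℤ)+2) := by ring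
  rw [ee, ee]
  generalize hu : 4*(j+1)^2 - 2*(j+1) = u at *
  generalize hv : 4*j^2 - 2*j = v at *
  omega

lemma stepN (N M : ℕ) : Sg (N+1) M = (1 - X ^ (8*N+2)) * Sg N M := by
  have hpas : ∀ j : ℤ, GB (M + (N+1)) ((M:ℤ) + j)
      = GB (M+N) ((M:ℤ) + j)
        + X ^ ((8 * ((N:ℤ) + 1 - j)).toNat) * GB (M+N) ((M:ℤ) + (j-1)) := by
    intro j
    have h := pascal1 (M+N) ((M:ℤ)+j)
    rw [show (M:ℤ)+j-1 = (M:ℤ)+(j-1) by ring] at h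
    rw [show M+(N+1) = (M+N)+1 by omega, h]
    congr 3
    push_cast; ring
  rw [Sg, show (((N+1:ℕ)):ℤ) = (N:ℤ)+1 by push_cast; ring]
  have hsplit : ∑ j ∈ Finset.Icc (-(M:ℤ)) ((N:ℤ)+1), C (sg j) * (X ^ ee j * GB (M+(N+1)) ((M:ℤ)+j))
      = (∑ j ∈ Finset.Icc (-(M:ℤ)) ((N:ℤ)+1), C (sg j) * (X ^ ee j * GB (M+N) ((M:ℤ)+j)))
        + ∑ j ∈ Finset.Icc (-(M:ℤ)) ((N:ℤ)+1),
            C (sg j) * (X ^ ee j * (X ^ ((8*((N:ℤ)+1-j)).toNat) * GB (M+N) ((M:ℤ)+(j-1)))) := by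
    rw [← Finset.sum_add_distrib]
    refine Finset.sum_congr rfl fun j _ => ?_
    rw [hpas j]; ring
  rw [hsplit]
  have hA : ∑ j ∈ Finset.Icc (-(M:ℤ)) ((N:ℤ)+1), C (sg j) * (X ^ ee j * GB (M+N) ((M:ℤ)+j))
      = Sg N M := by
    rw [show Finset.Icc (-(M:ℤ)) ((N:ℤ)+1) = insert ((N:ℤ)+1) (Finset.Icc (-(M:ℤ)) (N:ℤ)) by
        ext x; simp only [Finset.mem_Icc, Finset.mem_insert]; omega,
      Finset.sum_insert (by simp)]
    rw [GB_gt (by push_cast; omega : ((M+N : ℕ) : ℤ) < (M:ℤ) + ((N:ℤ)+1))]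
    simp [Sg]
  have hB : ∑ j ∈ Finset.Icc (-(M:ℤ)) ((N:ℤ)+1),
        C (sg j) * (X ^ ee j * (X ^ ((8*((N:ℤ)+1-j)).toNat) * GB (M+N) ((M:ℤ)+(j-1))))
      = -(X ^ (8*N+2) * Sg N M) := by
    rw [show (-(M:ℤ)) = (-(M:ℤ)-1)+1 by ring, sum_shift']
    rw [show Finset.Icc (-(M:ℤ)-1) (N:ℤ) = insert (-(M:ℤ)-1) (Finset.Icc (-(M:ℤ)) (N:ℤ)) by
        ext x; simp only [Finset.mem_Icc, Finset.mem_insert]; omega,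
      Finset.sum_insert (by simp)]
    rw [show (M:ℤ) + (-(M:ℤ)-1+1-1) = -1 by ring, GB_neg (by omega : (-1:ℤ) < 0)]
    rw [mul_zero, mul_zero, mul_zero, zero_add]
    have hterm : ∀ j ∈ Finset.Icc (-(M:ℤ)) (N:ℤ),
        C (sg (j+1)) * (X ^ ee (j+1) * (X ^ ((8*((N:ℤ)+1-(j+1))).toNat) * GB (M+N) ((M:ℤ)+(j+1-1))))
        = -(X ^ (8*N+2) * (C (sg j) * (X ^ ee j * GB (M+N) ((M:ℤ)+j)))) := by
      intro j hj
      rw [Finset.mem_Icc] at hj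
      rw [show (M:ℤ)+(j+1-1) = (M:ℤ)+j by ring, sg_succ, map_neg,
        show (N:ℤ)+1-(j+1) = (N:ℤ)-j by ring]
      have hx : (X : PowerSeries ℚ) ^ ee (j+1) * X ^ ((8*((N:ℤ)-j)).toNat)
          = X ^ ee j * X ^ (8*N+2) := by
        rw [← pow_add, ← pow_add, ee_shift_up j N hj.2]
      calc -(C (sg j)) * (X ^ ee (j+1) * (X ^ ((8*((N:ℤ)-j)).toNat) * GB (M+N) ((M:ℤ)+j)))
          = -(C (sg j)) * ((X ^ ee (j+1) * X ^ ((8*((N:ℤ)-j)).toNat)) * GB (M+N) ((M:ℤ)+j)) := by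
            ring
        _ = -(C (sg j)) * ((X ^ ee j * X ^ (8*N+2)) * GB (M+N) ((M:ℤ)+j)) := by rw [hx]
        _ = -(X ^ (8*N+2) * (C (sg j) * (X ^ ee j * GB (M+N) ((M:ℤ)+j)))) := by ring
    rw [Finset.sum_congr rfl hterm, Finset.sum_neg_distrib, ← Finset.mul_sum, Sg]
  rw [hA, hB]; ring

lemma ee_shift_down (j : ℤ) (M : ℕ) (hj : -(M:ℤ) ≤ j) :
    ee (j-1) + (8*((M:ℤ)+j)).toNat = ee j + (8*M+6) := by
  have h1 : 0 ≤ 4*(j-1)^2 - 2*(j-1) := quad0 (j-1)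
  have h2 : 0 ≤ 4*j^2 - 2*j := quad0 j
  have h3 : (4*(j-1)^2 - 2*(j-1)) + 8*((M:ℤ)+j) = (4*j^2-2*j) + (8*(M:ℤ)+6) := by ring
  rw [ee, ee]
  generalize hu : 4*(j-1)^2 - 2*(j-1) = u at *
  generalize hv : 4*j^2 - 2*j = v at *
  omega

lemma sg_pred (j : ℤ) : sg (j - 1) = -sg j := by
  have := sg_succ (j-1)
  rw [sub_add_cancel] at this
  rw [this]; ring

lemma stepM (N M : ℕ) : Sg N (M+1) = (1 - X ^ (8*M+6)) * Sg N M := by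
  have hpas : ∀ j : ℤ, GB ((M+1) + N) (((M+1:ℕ):ℤ) + j)
      = X ^ ((8*((M:ℤ)+(j+1))).toNat) * GB (M+N) ((M:ℤ)+(j+1)) + GB (M+N) ((M:ℤ)+j) := by
    intro j
    have h := pascal2 (M+N) ((M:ℤ)+1+j)
    rw [show (M:ℤ)+1+j-1 = (M:ℤ)+j by ring] at h
    rw [show (M+1)+N = (M+N)+1 by omega, show ((M+1:ℕ):ℤ)+j = (M:ℤ)+1+j by push_cast; ring, h,
      show (M:ℤ)+1+j = (M:ℤ)+(j+1) by ring]
  rw [Sg, show (-((M+1:ℕ):ℤ)) = -(M:ℤ)-1 by push_cast; ring]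
  have hsplit : ∑ j ∈ Finset.Icc (-(M:ℤ)-1) (N:ℤ),
        C (sg j) * (X ^ ee j * GB ((M+1)+N) (((M+1:ℕ):ℤ)+j))
      = (∑ j ∈ Finset.Icc (-(M:ℤ)-1) (N:ℤ),
          C (sg j) * (X ^ ee j * (X ^ ((8*((M:ℤ)+(j+1))).toNat) * GB (M+N) ((M:ℤ)+(j+1)))))
        + ∑ j ∈ Finset.Icc (-(M:ℤ)-1) (N:ℤ),
            C (sg j) * (X ^ ee j * GB (M+N) ((M:ℤ)+j)) := by
    rw [← Finset.sum_add_distrib]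
    refine Finset.sum_congr rfl fun j _ => ?_
    rw [hpas j]; ring
  rw [hsplit]
  have hB : ∑ j ∈ Finset.Icc (-(M:ℤ)-1) (N:ℤ), C (sg j) * (X ^ ee j * GB (M+N) ((M:ℤ)+j))
      = Sg N M := by
    rw [show Finset.Icc (-(M:ℤ)-1) (N:ℤ) = insert (-(M:ℤ)-1) (Finset.Icc (-(M:ℤ)) (N:ℤ)) by
        ext x; simp only [Finset.mem_Icc, Finset.mem_insert]; omega,
      Finset.sum_insert (by simp)]
    rw [show (M:ℤ) + (-(M:ℤ)-1) = -1 by ring, GB_neg (by omega : (-1:ℤ) < 0)]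
    simp [Sg]
  have hA : ∑ j ∈ Finset.Icc (-(M:ℤ)-1) (N:ℤ),
        C (sg j) * (X ^ ee j * (X ^ ((8*((M:ℤ)+(j+1))).toNat) * GB (M+N) ((M:ℤ)+(j+1))))
      = -(X ^ (8*M+6) * Sg N M) := by
    have hshift := sum_shift' (-(M:ℤ)-1) (N:ℤ) (fun j =>
      C (sg (j-1)) * (X ^ ee (j-1) * (X ^ ((8*((M:ℤ)+(j-1+1))).toNat)
        * GB (M+N) ((M:ℤ)+(j-1+1)))))
    simp only [add_sub_cancel_right] at hshift
    rw [show (-(M:ℤ)-1+1) = -(M:ℤ) by ring] at hshift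
    rw [← hshift]
    rw [show Finset.Icc (-(M:ℤ)) ((N:ℤ)+1) = insert ((N:ℤ)+1) (Finset.Icc (-(M:ℤ)) (N:ℤ)) by
        ext x; simp only [Finset.mem_Icc, Finset.mem_insert]; omega,
      Finset.sum_insert (by simp)]
    rw [show ((N:ℤ)+1-1) = (N:ℤ) by ring]
    rw [GB_gt (by push_cast; omega : ((M+N : ℕ) : ℤ) < (M:ℤ) + ((N:ℤ)+1)), mul_zero, mul_zero,
      mul_zero, zero_add]
    have hterm : ∀ j ∈ Finset.Icc (-(M:ℤ)) (N:ℤ),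
        C (sg (j-1)) * (X ^ ee (j-1) * (X ^ ((8*((M:ℤ)+j)).toNat) * GB (M+N) ((M:ℤ)+j)))
        = -(X ^ (8*M+6) * (C (sg j) * (X ^ ee j * GB (M+N) ((M:ℤ)+j)))) := by
      intro j hj
      rw [Finset.mem_Icc] at hj
      rw [sg_pred, map_neg]
      have hx : (X : PowerSeries ℚ) ^ ee (j-1) * X ^ ((8*((M:ℤ)+j)).toNat)
          = X ^ ee j * X ^ (8*M+6) := by
        rw [← pow_add, ← pow_add, ee_shift_down j M hj.1]
      calc -(C (sg j)) * (X ^ ee (j-1) * (X ^ ((8*((M:ℤ)+j)).toNat) * GB (M+N) ((M:ℤ)+j)))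
          = -(C (sg j)) * ((X ^ ee (j-1) * X ^ ((8*((M:ℤ)+j)).toNat)) * GB (M+N) ((M:ℤ)+j)) := by
            ring
        _ = -(C (sg j)) * ((X ^ ee j * X ^ (8*M+6)) * GB (M+N) ((M:ℤ)+j)) := by rw [hx]
        _ = -(X ^ (8*M+6) * (C (sg j) * (X ^ ee j * GB (M+N) ((M:ℤ)+j)))) := by ring
    have hsimp : ∀ j ∈ Finset.Icc (-(M:ℤ)) (N:ℤ),
        C (sg (j-1)) * (X ^ ee (j-1) * (X ^ ((8*((M:ℤ)+(j-1+1))).toNat)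
          * GB (M+N) ((M:ℤ)+(j-1+1))))
        = -(X ^ (8*M+6) * (C (sg j) * (X ^ ee j * GB (M+N) ((M:ℤ)+j)))) := by
      intro j hj
      rw [show j-1+1 = j by ring]
      exact hterm j hj
    rw [Finset.sum_congr rfl hsimp, Finset.sum_neg_distrib, ← Finset.mul_sum, Sg]
  rw [hA, hB]; ring

lemma Sg_base : Sg 0 0 = 1 := by
  rw [Sg]
  rw [show (-((0:ℕ):ℤ)) = 0 by norm_num, show (((0:ℕ)):ℤ) = 0 by norm_num, Finset.Icc_self,
    Finset.sum_singleton]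
  norm_num [GB_zero, sg, ee]

/-- The finite Jacobi triple product identity. -/
lemma jtp (N M : ℕ) :
    (∏ k ∈ Finset.range N, (1 - X ^ (8*k+2))) * ∏ k ∈ Finset.range M, (1 - X ^ (8*k+6))
      = Sg N M := by
  induction N with
  | zero =>
    induction M with
    | zero => simpa using Sg_base.symm
    | succ M ihM =>
      rw [stepM, ← ihM, Finset.prod_range_succ]
      ring
  | succ N ihN =>
    rw [stepN, ← ihN, Finset.prod_range_succ]
    ring

lemma Pi8_div (r m : ℕ) (h : r ≤ m) :
    Pi8 m * (Pi8 r)⁻¹ = ∏ i ∈ Finset.Ico r m, (1 - X ^ (8*i+8)) := by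
  have hm : Pi8 r * ∏ i ∈ Finset.Ico r m, (1 - X ^ (8*i+8)) = Pi8 m :=
    Finset.prod_range_mul_prod_Ico _ h
  calc Pi8 m * (Pi8 r)⁻¹
      = (Pi8 r * ∏ i ∈ Finset.Ico r m, (1 - X ^ (8*i+8))) * (Pi8 r)⁻¹ := by rw [hm]
    _ = (Pi8 r * (Pi8 r)⁻¹) * ∏ i ∈ Finset.Ico r m, (1 - X ^ (8*i+8)) := by ring
    _ = ∏ i ∈ Finset.Ico r m, (1 - X ^ (8*i+8)) := by rw [Pi8_mul_inv, one_mul]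

lemma Pi8_mul_GB (m r : ℕ) (h : r ≤ m) :
    Pi8 m * GB m (r : ℤ)
      = (∏ i ∈ Finset.Ico r m, (1 - X ^ (8*i+8)))
        * ∏ i ∈ Finset.Ico (m-r) m, (1 - X ^ (8*i+8)) := by
  rw [GB_eval m r h, ← Pi8_div r m h, ← Pi8_div (m-r) m (by omega)]
  ring

lemma EqN_prod {n : ℕ} {ι : Type*} (s : Finset ι) (f : ι → PowerSeries ℚ)
    (h : ∀ i ∈ s, EqN n (f i) 1) : EqN n (∏ i ∈ s, f i) 1 := by
  classical
  induction s using Finset.induction with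
  | empty => rw [Finset.prod_empty]; exact EqN.refl
  | insert _ _ hnot ih =>
    rename_i a s'
    rw [Finset.prod_insert hnot]
    intro m hm
    have := (EqN.mul (h a (Finset.mem_insert_self a s'))
      (ih fun i hi => h i (Finset.mem_insert_of_mem hi))) m hm
    simpa using this

lemma coeff_X_pow_mul_W (n a : ℕ) (W : PowerSeries ℚ) (hW : EqN (n - a) W 1) :
    coeff n (X ^ a * W) = if n = a then 1 else 0 := by
  rw [mul_comm, PowerSeries.coeff_mul_X_pow']
  by_cases h : a ≤ n
  · rw [if_pos h, hW (n - a) le_rfl, coeff_one]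
    by_cases h2 : n = a
    · rw [if_pos (by omega), if_pos h2]
    · rw [if_neg (by omega), if_neg h2]
  · rw [if_neg h, if_neg (by omega)]

lemma quad2 (j : ℤ) : -2 ≤ 4*j^2 + 6*j := by
  rcases le_or_gt 0 j with h | h
  · nlinarith
  · nlinarith

lemma quad3 (j : ℤ) : -6 ≤ 4*j^2 - 10*j := by
  rcases le_or_gt j 1 with h | h
  · nlinarith
  · nlinarith

lemma ee_inj {a b : ℤ} (h : ee a = ee b) : a = b := by
  have h2 : ((ee a : ℤ)) = ((ee b : ℤ)) := by exact_mod_cast h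
  rw [ee_cast, ee_cast] at h2
  have h3 : (a - b) * (4*(a+b) - 2) = 0 := by linear_combination h2
  rcases mul_eq_zero.1 h3 with h4 | h4
  · omega
  · omega

lemma coeff_term (n L : ℕ) (hL : L = n + 1) (j : ℤ) (hj : j ∈ Finset.Icc (-(L:ℤ)) (L:ℤ)) :
    coeff n (Pi8 (L+L) * (C (sg j) * (X ^ ee j * GB (L+L) ((L:ℤ)+j))))
      = sg j * (if n = ee j then 1 else 0) := by
  obtain ⟨hj1, hj2⟩ := Finset.mem_Icc.1 hj
  have hr0 : (0:ℤ) ≤ (L:ℤ) + j := by omega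
  set r : ℕ := ((L:ℤ) + j).toNat with hrdef
  have hrc : ((r:ℤ)) = (L:ℤ) + j := by omega
  have hrm : r ≤ L + L := by omega
  have step1 : Pi8 (L+L) * (C (sg j) * (X ^ ee j * GB (L+L) ((L:ℤ)+j)))
      = C (sg j) * (X ^ ee j * (Pi8 (L+L) * GB (L+L) ((r:ℤ)))) := by
    rw [hrc]; ring
  rw [step1, Pi8_mul_GB (L+L) r hrm, coeff_C_mul]
  congr 1
  -- coefficient of the X-power times the two tail products
  have key1 : (n:ℤ) < (ee j : ℤ) + 8*((L:ℤ)+j) + 8 := by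
    have hv : -2 ≤ 4*j^2+6*j := quad2 j
    have hee : (ee j : ℤ) = (4*j^2+6*j) - 8*j := by rw [ee_cast]; ring
    generalize 4*j^2+6*j = v at hv hee
    omega
  have key2 : (n:ℤ) < (ee j : ℤ) + 8*((L:ℤ)-j) + 8 := by
    have hv : -6 ≤ 4*j^2-10*j := quad3 j
    have hee : (ee j : ℤ) = (4*j^2-10*j) + 8*j := by rw [ee_cast]; ring
    generalize 4*j^2-10*j = v at hv hee
    omega
  apply coeff_X_pow_mul_W
  intro m hm
  have hprod := EqN.mul
    (EqN_prod (n := n - ee j) (Finset.Ico r (L+L)) (fun i => 1 - X ^ (8*i+8))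
      (fun i hi => by
        have hi' := Finset.mem_Ico.1 hi
        exact EqN_one_sub (by omega)))
    (EqN_prod (n := n - ee j) (Finset.Ico (L+L-r) (L+L)) (fun i => 1 - X ^ (8*i+8))
      (fun i hi => by
        have hi' := Finset.mem_Ico.1 hi
        exact EqN_one_sub (by omega)))
  have := hprod m hm
  simpa using this

lemma exists_tri_iff (n : ℕ) (j : ℤ) (hn : n = ee j) : ∃ k : ℕ, n = k * (k+1) := by
  have hnz : ((n:ℤ)) = 4*j^2 - 2*j := by rw [hn, ee_cast]
  rcases le_or_gt 1 j with hj | hj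
  · refine ⟨(2*j-1).toNat, ?_⟩
    have hk : (((2*j-1).toNat : ℤ)) = 2*j-1 := by omega
    have : ((n:ℤ)) = ((2*j-1).toNat : ℤ) * (((2*j-1).toNat : ℤ) + 1) := by
      rw [hk]; linear_combination hnz
    exact_mod_cast this
  · refine ⟨(-2*j).toNat, ?_⟩
    have hk : (((-2*j).toNat : ℤ)) = -2*j := by omega
    have : ((n:ℤ)) = ((-2*j).toNat : ℤ) * (((-2*j).toNat : ℤ) + 1) := by
      rw [hk]; linear_combination hnz
    exact_mod_cast this

lemma theta_coeff (n : ℕ) :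
    coeff n (Pi8 ((n+1)+(n+1)) * Sg (n+1) (n+1))
      = (if ∃ k : ℕ, n = k * (k+1) then (-1:ℚ) ^ (n / 2) else 0) := by
  rw [Sg, Finset.mul_sum, map_sum]
  rw [Finset.sum_congr rfl (fun j hj => coeff_term n (n+1) rfl j hj)]
  by_cases h : ∃ k : ℕ, n = k * (k+1)
  · rw [if_pos h]
    obtain ⟨k, hk⟩ := h
    rcases Nat.even_or_odd k with ⟨t, ht⟩ | ⟨t, ht⟩
    · -- k = t + t ; j0 = -t
      have hn : n = 4*t^2 + 2*t := by rw [hk, ht]; ring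
      set j0 : ℤ := -(t:ℤ) with hj0
      have hee0 : ee j0 = n := by
        have hcast : 4*j0^2 - 2*j0 = ((4*t^2+2*t : ℕ) : ℤ) := by rw [hj0]; push_cast; ring
        rw [ee, hcast, Int.toNat_natCast, hn]
      have htn : t ≤ n := by nlinarith
      have hmem : j0 ∈ Finset.Icc (-((n+1:ℕ):ℤ)) ((n+1:ℕ):ℤ) := by
        rw [Finset.mem_Icc, hj0]
        push_cast
        omega
      rw [Finset.sum_eq_single j0 ?hvan (fun hc => absurd hmem hc)]
      · rw [if_pos hee0.symm, mul_one]
        have hdiv : n / 2 = 2*(t*t) + t := by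
          have : n = 4*(t*t) + 2*t := by rw [hn]; ring
          omega
        rcases Nat.even_or_odd t with he | he
        · have hev : Even j0 := by
            rw [hj0, even_neg]
            exact_mod_cast he
          have h1 : sg j0 = 1 := by rw [sg, if_pos hev]
          have h2 : Even (n / 2) := by
            rw [hdiv]
            rcases he with ⟨s, hs⟩
            exact ⟨t*t + s, by omega⟩
          rw [h1, Even.neg_one_pow h2]
        · have hev : ¬ Even j0 := by
            rw [hj0, even_neg]
            intro hcon
            exact (Nat.not_even_iff_odd.2 he) (by exact_mod_cast hcon)
          have h1 : sg j0 = -1 := by rw [sg, if_neg hev]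
          have h2 : Odd (n / 2) := by
            rw [hdiv]
            rcases he with ⟨s, hs⟩
            refine ⟨(t*t) + s, by omega⟩
          rw [h1, Odd.neg_one_pow h2]
      · intro b hb hbne
        rw [if_neg (fun hc => hbne (ee_inj (by rw [← hc, hee0]))), mul_zero]
    · -- k = 2t+1 ; j0 = t+1
      have hn : n = 4*t^2 + 6*t + 2 := by rw [hk, ht]; ring
      set j0 : ℤ := (t:ℤ) + 1 with hj0
      have hee0 : ee j0 = n := by
        have hcast : 4*j0^2 - 2*j0 = ((4*t^2+6*t+2 : ℕ) : ℤ) := by rw [hj0]; push_cast; ring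
        rw [ee, hcast, Int.toNat_natCast, hn]
      have htn : t ≤ n := by nlinarith
      have hmem : j0 ∈ Finset.Icc (-((n+1:ℕ):ℤ)) ((n+1:ℕ):ℤ) := by
        rw [Finset.mem_Icc, hj0]
        push_cast
        omega
      rw [Finset.sum_eq_single j0 ?hvan2 (fun hc => absurd hmem hc)]
      · rw [if_pos hee0.symm, mul_one]
        have hdiv : n / 2 = 2*(t*t) + 3*t + 1 := by
          have : n = 4*(t*t) + 6*t + 2 := by rw [hn]; ring
          omega
        rcases Nat.even_or_odd t with he | he
        · have hev : ¬ Even j0 := by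
            rw [hj0, Int.even_add_one]
            intro hcon
            exact hcon (by exact_mod_cast he)
          have h1 : sg j0 = -1 := by rw [sg, if_neg hev]
          have h2 : Odd (n / 2) := by
            rw [hdiv]
            rcases he with ⟨s, hs⟩
            exact ⟨t*t + 3*s, by omega⟩
          rw [h1, Odd.neg_one_pow h2]
        · have hev : Even j0 := by
            rw [hj0, Int.even_add_one]
            intro hcon
            exact (Nat.not_even_iff_odd.2 he) (by exact_mod_cast hcon)
          have h1 : sg j0 = 1 := by rw [sg, if_pos hev]
          have h2 : Even (n / 2) := by
            rw [hdiv]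
            rcases he with ⟨s, hs⟩
            exact ⟨t*t + 3*s + 2, by omega⟩
          rw [h1, Even.neg_one_pow h2]
      · intro b hb hbne
        rw [if_neg (fun hc => hbne (ee_inj (by rw [← hc, hee0]))), mul_zero]
  · rw [if_neg h]
    apply Finset.sum_eq_zero
    intro j hj
    rw [if_neg (fun hc => h (exists_tri_iff n j hc)), mul_zero]

set_option maxHeartbeats 1000000 in
lemma halg (L : ℕ) :
    (∏ k ∈ Finset.range (2*L), (1 + (X:PowerSeries ℚ) ^ (4*k+4)))
      * ∏ k ∈ Finset.range (2*(2*L)), (1 - (X:PowerSeries ℚ) ^ (2*k+2))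
    = Pi8 (L+L) * Sg L L := by
  have e1 : ∏ k ∈ Finset.range (2*(2*L)), (1 - (X:PowerSeries ℚ) ^ (2*k+2))
      = (∏ k ∈ Finset.range (2*L), (1 - (X:PowerSeries ℚ) ^ (4*k+2)))
        * ∏ k ∈ Finset.range (2*L), (1 - (X:PowerSeries ℚ) ^ (4*k+4)) := by
    rw [prod_range_two_mul (fun k => 1 - X ^ (2*k+2)) (2*L)]
    congr 1
    · exact Finset.prod_congr rfl fun k _ => by rw [show 2*(2*k)+2 = 4*k+2 by ring]
    · exact Finset.prod_congr rfl fun k _ => by rw [show 2*(2*k+1)+2 = 4*k+4 by ring]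
  have e2 : (∏ k ∈ Finset.range (2*L), (1 + (X:PowerSeries ℚ) ^ (4*k+4)))
      * ∏ k ∈ Finset.range (2*L), (1 - (X:PowerSeries ℚ) ^ (4*k+4)) = Pi8 (L+L) := by
    rw [← Finset.prod_mul_distrib, Pi8, show L+L = 2*L by ring]
    refine Finset.prod_congr rfl fun k _ => ?_
    have : (1 + (X:PowerSeries ℚ) ^ (4*k+4)) * (1 - X ^ (4*k+4))
        = 1 - X ^ ((4*k+4) + (4*k+4)) := by ring
    rw [this, show (4*k+4) + (4*k+4) = 8*k+8 by ring]
  have e3 : ∏ k ∈ Finset.range (2*L), (1 - (X:PowerSeries ℚ) ^ (4*k+2))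
      = (∏ k ∈ Finset.range L, (1 - (X:PowerSeries ℚ) ^ (8*k+2)))
        * ∏ k ∈ Finset.range L, (1 - (X:PowerSeries ℚ) ^ (8*k+6)) := by
    rw [prod_range_two_mul (fun k => 1 - X ^ (4*k+2)) L]
    congr 1
    · exact Finset.prod_congr rfl fun k _ => by rw [show 4*(2*k)+2 = 8*k+2 by ring]
    · exact Finset.prod_congr rfl fun k _ => by rw [show 4*(2*k+1)+2 = 8*k+6 by ring]
  calc (∏ k ∈ Finset.range (2*L), (1 + X ^ (4*k+4)))
        * ∏ k ∈ Finset.range (2*(2*L)), (1 - X ^ (2*k+2))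
      = (∏ k ∈ Finset.range (2*L), (1 - X ^ (4*k+2)))
        * ((∏ k ∈ Finset.range (2*L), (1 + X ^ (4*k+4)))
          * ∏ k ∈ Finset.range (2*L), (1 - X ^ (4*k+4))) := by rw [e1]; ring
    _ = ((∏ k ∈ Finset.range L, (1 - X ^ (8*k+2)))
        * ∏ k ∈ Finset.range L, (1 - X ^ (8*k+6))) * Pi8 (L+L) := by rw [e2, e3]
    _ = Pi8 (L+L) * Sg L L := by rw [jtp L L]; ring

lemma main2 : P4' * P4 = RHS := by
  ext n
  have hf4' : ∀ n k, n ≤ k → EqN n (1 + (X:PowerSeries ℚ) ^ (4*k+4)) 1 :=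
    fun n k h => EqN_one_add (by omega)
  have hf4 : ∀ n k, n ≤ k → EqN n (1 - (X:PowerSeries ℚ) ^ (2*k+2)) 1 :=
    fun n k h => EqN_one_sub (by omega)
  have h4' : EqN n P4' (∏ k ∈ Finset.range (2*(n+1)), (1 + X ^ (4*k+4))) :=
    EqN_infProd _ hf4' n (2*(n+1)) (by omega)
  have h4 : EqN n P4 (∏ k ∈ Finset.range (2*(2*(n+1))), (1 - X ^ (2*k+2))) :=
    EqN_infProd _ hf4 n (2*(2*(n+1))) (by omega)
  have hco := (h4'.mul h4) n le_rfl
  rw [hco, halg (n+1), theta_coeff n, RHS, coeff_mk]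

lemma h135 : P1 * P3 = P5 := by
  ext n
  have hf1 : ∀ n k, n ≤ k → EqN n (1 + (X:PowerSeries ℚ) ^ (4*k+1)) 1 :=
    fun n k h => EqN_one_add (by omega)
  have hf3 : ∀ n k, n ≤ k → EqN n (1 + (X:PowerSeries ℚ) ^ (4*k+3)) 1 :=
    fun n k h => EqN_one_add (by omega)
  have hf5 : ∀ n k, n ≤ k → EqN n (1 + (X:PowerSeries ℚ) ^ (2*k+1)) 1 :=
    fun n k h => EqN_one_add (by omega)
  have h1 : EqN n P1 (∏ k ∈ Finset.range (n+1), (1 + X ^ (4*k+1))) :=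
    EqN_infProd _ hf1 n (n+1) (by omega)
  have h3 : EqN n P3 (∏ k ∈ Finset.range (n+1), (1 + X ^ (4*k+3))) :=
    EqN_infProd _ hf3 n (n+1) (by omega)
  have hco := (h1.mul h3) n le_rfl
  rw [hco]
  have h5 : coeff n P5 = coeff n (∏ k ∈ Finset.range (2*(n+1)), (1 + X ^ (2*k+1))) :=
    coeff_infProd _ hf5 n (2*(n+1)) (by omega)
  rw [h5, prod_range_two_mul (fun k => 1 + X ^ (2*k+1)) (n+1)]
  congr 2
  · exact Finset.prod_congr rfl fun k _ => by rw [show 2*(2*k)+1 = 4*k+1 by ring]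
  · exact Finset.prod_congr rfl fun k _ => by rw [show 2*(2*k+1)+1 = 4*k+3 by ring]

lemma P5_unit : P5 * P5⁻¹ = 1 := by
  apply PowerSeries.mul_inv_cancel
  have h : constantCoeff P5 = coeff 0 P5 := by
    rw [PowerSeries.coeff_zero_eq_constantCoeff]
  have hf5 : ∀ n k, n ≤ k → EqN n (1 + (X:PowerSeries ℚ) ^ (2*k+1)) 1 :=
    fun n k hh => EqN_one_add (by omega)
  rw [h, P5, coeff_infProd _ hf5 0 1 (by omega), Finset.prod_range_one]
  simp


/-- `(-q;q⁴)_∞(-q³;q⁴)_∞(-q⁴;q⁴)_∞ · (q²;q²)_∞/(-q;q²)_∞ = ∑ (-1)^{n(n+1)/2} q^{n(n+1)}`. -/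
theorem stmt_10 : P1 * P3 * P4' * (P4 * P5⁻¹) = RHS := by
  calc P1 * P3 * P4' * (P4 * P5⁻¹)
      = (P1 * P3) * P5⁻¹ * (P4' * P4) := by ring
    _ = P5 * P5⁻¹ * (P4' * P4) := by rw [h135]
    _ = P4' * P4 := by rw [P5_unit, one_mul]
    _ = RHS := main2
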